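/- Let α, β be complex numbers and γ a nonnegative real number. If |β| ≤ |α| and |Re(β)| ≤ |Re(α)|, then max(|β + γ|, |β − γ|) ≤ max(|α + γ|, |α − γ|). (Elementary inequality underlying the proof of the Strong Lemma, relating really strong contractivity to strong contractivity.) -/

import Mathlib

/-- **Elementary inequality underlying the Strong Lemma.**  If `α, β ∈ ℂ` and `γ ≥ 0` is
real, with `|β| ≤ |α|` and `|Re β| ≤ |Re α|`, then
`max (|β + γ|, |β − γ|) ≤ max (|α + γ|, |α − γ|)`. -/
theorem max_abs_add_sub_mono
    (α β : ℂ) (γ : ℝ) (hγ : 0 ≤ γ)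
    (habs : ‖β‖ ≤ ‖α‖)
    (hre : |β.re| ≤ |α.re|) :
    max ‖β + (γ : ℂ)‖ ‖β - (γ : ℂ)‖ ≤
      max ‖α + (γ : ℂ)‖ ‖α - (γ : ℂ)‖ := by
  have keyadd : ∀ z : ℂ, ‖z + (γ : ℂ)‖ ^ 2
      = ‖z‖ ^ 2 + 2 * γ * z.re + γ ^ 2 := by
    intro z
    rw [← Complex.normSq_eq_norm_sq, ← Complex.normSq_eq_norm_sq]
    simp [Complex.normSq_apply]
    ring
  have keysub : ∀ z : ℂ, ‖z - (γ : ℂ)‖ ^ 2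
      = ‖z‖ ^ 2 - 2 * γ * z.re + γ ^ 2 := by
    intro z
    rw [← Complex.normSq_eq_norm_sq, ← Complex.normSq_eq_norm_sq]
    simp [Complex.normSq_apply]
    ring
  set M := max ‖α + (γ : ℂ)‖ ‖α - (γ : ℂ)‖ with hM
  have hM0 : 0 ≤ M := le_trans (norm_nonneg _) (le_max_left _ _)
  have hMsq : ‖α‖ ^ 2 + 2 * γ * |α.re| + γ ^ 2 ≤ M ^ 2 := by
    rcases abs_cases α.re with ⟨h1, h2⟩ | ⟨h1, h2⟩
    · have := le_max_left ‖α + (γ : ℂ)‖ ‖α - (γ : ℂ)‖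
      have h3 : ‖α + (γ : ℂ)‖ ^ 2 ≤ M ^ 2 :=
        pow_le_pow_left₀ (norm_nonneg _) this 2
      rw [keyadd] at h3; rw [h1]; linarith
    · have := le_max_right ‖α + (γ : ℂ)‖ ‖α - (γ : ℂ)‖
      have h3 : ‖α - (γ : ℂ)‖ ^ 2 ≤ M ^ 2 :=
        pow_le_pow_left₀ (norm_nonneg _) this 2
      rw [keysub] at h3; rw [h1]; linarith
  have hb0 : 0 ≤ ‖β‖ := norm_nonneg _
  have ha0 : 0 ≤ ‖α‖ := norm_nonneg _
  have hbre : β.re ≤ |β.re| := le_abs_self _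
  have hbre' : -β.re ≤ |β.re| := neg_le_abs _
  refine max_le ?_ ?_
  · have : ‖β + (γ : ℂ)‖ ^ 2 ≤ M ^ 2 := by
      rw [keyadd]
      nlinarith [hbre, hre, hγ, habs, hb0, ha0]
    exact (pow_le_pow_iff_left₀ (norm_nonneg _) hM0 two_ne_zero).mp this
  · have : ‖β - (γ : ℂ)‖ ^ 2 ≤ M ^ 2 := by
      rw [keysub]
      nlinarith [hbre', hre, hγ, habs, hb0, ha0]
    exact (pow_le_pow_iff_left₀ (norm_nonneg _) hM0 two_ne_zero).mp this
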